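/- The set {(n, n + ⌊√n⌋) : n ≥ 1} ⊆ ℕ² is not a semilinear subset of ℕ², i.e., it is not a finite union of sets of the form {v₀ + k₁v₁ + ⋯ + kₘvₘ : k₁,…,kₘ ∈ ℕ}. -/

import Mathlib

/-- A subset of ℕ² is linear if it is of the form
`{v₀ + k₁v₁ + ⋯ + kₘvₘ : kᵢ ∈ ℕ}`. -/
def IsLinearSet₂ (S : Set (ℕ × ℕ)) : Prop :=
  ∃ (v₀ : ℕ × ℕ) (m : ℕ) (v : Fin m → ℕ × ℕ),
    S = {x | ∃ k : Fin m → ℕ, x = v₀ + ∑ i, k i • v i}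

/-- A subset of ℕ² is semilinear if it is a finite union of linear sets. -/
def IsSemilinearSet₂ (S : Set (ℕ × ℕ)) : Prop :=
  ∃ (r : ℕ) (f : Fin r → Set (ℕ × ℕ)), (∀ i, IsLinearSet₂ (f i)) ∧ S = ⋃ i, f i

lemma ray_false (a c b d : ℕ) (hbd : b ≠ 0 ∨ d ≠ 0)
    (h : ∀ k : ℕ, c + k * d = a + k * b + Nat.sqrt (a + k * b)) : False := by
  have h0 := h 0
  simp at h0
  rcases Nat.eq_zero_or_pos b with hb | hb
  · have h1 := h 1
    subst hb
    simp at h1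
    have hd : d = 0 := by omega
    tauto
  · have h1 := h 1
    have hmono : Nat.sqrt a ≤ Nat.sqrt (a + b) := Nat.sqrt_le_sqrt (by omega)
    set e := Nat.sqrt (a + b) - Nat.sqrt a with he
    have hde : d = b + e := by simp at h1; omega
    have key : ∀ k, Nat.sqrt (a + k * b) = Nat.sqrt a + k * e := by
      intro k
      have := h k
      rw [hde] at this
      have : c + k * (b + e) = a + k * b + Nat.sqrt (a + k * b) := this
      nlinarith [this, h0]
    rcases Nat.eq_zero_or_pos e with he0 | he1
    · set k := (Nat.sqrt a + 1) * (Nat.sqrt a + 1) with hk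
      have h2 : (Nat.sqrt a + 1) * (Nat.sqrt a + 1) ≤ a + k * b := by
        have : k ≤ k * b := Nat.le_mul_of_pos_right k hb
        omega
      have h3 : Nat.sqrt a + 1 ≤ Nat.sqrt (a + k * b) := Nat.le_sqrt.mpr h2
      rw [key k, he0] at h3
      omega
    · set k := a + b + 1 with hk
      have h2 : k ≤ Nat.sqrt (a + k * b) := by
        rw [key k]; nlinarith
      have h3 : Nat.sqrt (a + k * b) * Nat.sqrt (a + k * b) ≤ a + k * b := by
        have := Nat.sqrt_le' (a + k * b)
        nlinarith
      have h4 : k * k ≤ a + k * b := le_trans (Nat.mul_le_mul h2 h2) h3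
      nlinarith

lemma linear_subsingleton (T : Set (ℕ × ℕ)) (hT : IsLinearSet₂ T)
    (hsub : T ⊆ {x : ℕ × ℕ | ∃ n : ℕ, 1 ≤ n ∧ x = (n, n + Nat.sqrt n)}) :
    T.Subsingleton := by
  obtain ⟨v₀, m, v, rfl⟩ := hT
  by_cases hz : ∀ j, v j = 0
  · intro x hx y hy
    obtain ⟨k, hk⟩ := hx
    obtain ⟨k', hk'⟩ := hy
    simp only [hz, smul_zero, Finset.sum_const_zero, add_zero] at hk hk'
    rw [hk, hk']
  · push_neg at hz
    obtain ⟨j, hj⟩ := hz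
    exfalso
    have hray : ∀ k : ℕ, v₀ + k • v j ∈ {x : ℕ × ℕ | ∃ n : ℕ, 1 ≤ n ∧ x = (n, n + Nat.sqrt n)} := by
      intro k
      apply hsub
      refine ⟨fun i => if i = j then k else 0, ?_⟩
      simp [ite_smul]
    have h : ∀ k : ℕ, v₀.2 + k * (v j).2 = v₀.1 + k * (v j).1 + Nat.sqrt (v₀.1 + k * (v j).1) := by
      intro k
      obtain ⟨n, _, hn⟩ := hray k
      have h1 : v₀.1 + k * (v j).1 = n := by
        have := congrArg Prod.fst hn
        simpa [smul_eq_mul] using this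
      have h2 : v₀.2 + k * (v j).2 = n + Nat.sqrt n := by
        have := congrArg Prod.snd hn
        simpa [smul_eq_mul] using this
      rw [h1, h2]
    apply ray_false v₀.1 v₀.2 (v j).1 (v j).2 _ h
    by_contra hc
    push_neg at hc
    exact hj (Prod.ext hc.1 hc.2)

theorem sqrt_set_not_semilinear :
    ¬ IsSemilinearSet₂ {x : ℕ × ℕ | ∃ n : ℕ, 1 ≤ n ∧ x = (n, n + Nat.sqrt n)} := by
  rintro ⟨r, f, hlin, hS⟩
  have hsub : ∀ i, f i ⊆ {x : ℕ × ℕ | ∃ n : ℕ, 1 ≤ n ∧ x = (n, n + Nat.sqrt n)} := by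
    intro i x hx
    rw [hS]; exact Set.mem_iUnion.mpr ⟨i, hx⟩
  have hfin : Set.Finite {x : ℕ × ℕ | ∃ n : ℕ, 1 ≤ n ∧ x = (n, n + Nat.sqrt n)} := by
    rw [hS]
    exact Set.finite_iUnion fun i => ((linear_subsingleton _ (hlin i) (hsub i)).finite)
  have hinf : Set.Infinite {x : ℕ × ℕ | ∃ n : ℕ, 1 ≤ n ∧ x = (n, n + Nat.sqrt n)} := by
    apply Set.infinite_of_injective_forall_mem
      (f := fun n : ℕ => ((n + 1 : ℕ), (n + 1 + Nat.sqrt (n + 1) : ℕ)))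
    · intro x y hxy
      simpa using congrArg Prod.fst hxy
    · intro n
      exact ⟨n + 1, by omega, rfl⟩
  exact hinf hfin
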